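/- arXiv:2604.15556 — 2 statements merged into one kernel-verified Lean document; each statement's English description precedes it below -/
import Mathlib

section
/- (Equivariance part of the AE-LPN Lemma.) Let n ≥ 1, let P = (1/n)·𝟏𝟏ᵀ be the orthogonal projection onto span{𝟏}, let h : ℝⁿ → ℝ be differentiable and positively homogeneous of degree two (h(a·x) = a²·h(x) for all a > 0), and define h̃(x) = h((I−P)x) + (1/2)·‖Px‖². Then ∇h̃ is scalar-affine equivariant: for every x ∈ ℝⁿ, every a > 0, and every c ∈ ℝ, ∇h̃(a·x + c·𝟏) = a·∇h̃(x) + c·𝟏. -/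
open scoped InnerProductSpace


/-- The all-ones vector in `ℝⁿ`. -/
noncomputable def onesVec (n : ℕ) : EuclideanSpace ℝ (Fin n) := WithLp.toLp 2 (fun _ => 1)

/-- `P x = ((1/n)·Σᵢ xᵢ)·𝟏`, the orthogonal projection onto `span{𝟏}`. -/
noncomputable def meanProj (n : ℕ) (x : EuclideanSpace ℝ (Fin n)) :
    EuclideanSpace ℝ (Fin n) :=
  ((1 / (n : ℝ)) * ∑ i, x i) • onesVec n

noncomputable def Pc (n : ℕ) : EuclideanSpace ℝ (Fin n) →L[ℝ] EuclideanSpace ℝ (Fin n) :=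
  (((1 / (n : ℝ)) • innerSL ℝ (onesVec n))).smulRight (onesVec n)

lemma inner_ones (n : ℕ) (x : EuclideanSpace ℝ (Fin n)) :
    ⟪onesVec n, x⟫_ℝ = ∑ i, x i := by
  simp [onesVec, PiLp.inner_apply]

lemma Pc_apply (n : ℕ) (x : EuclideanSpace ℝ (Fin n)) : Pc n x = meanProj n x := by
  simp [Pc, meanProj, inner_ones]

lemma onesVec_apply (n : ℕ) (i : Fin n) : onesVec n i = 1 := rfl

lemma Pc_apply_coord (n : ℕ) (x : EuclideanSpace ℝ (Fin n)) (i : Fin n) :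
    Pc n x i = (1 / (n : ℝ)) * ∑ j, x j := by
  simp [Pc_apply, meanProj, onesVec]

lemma sum_Pc (n : ℕ) (hn : 1 ≤ n) (x : EuclideanSpace ℝ (Fin n)) :
    ∑ i, Pc n x i = ∑ i, x i := by
  have hn' : (n : ℝ) ≠ 0 := Nat.cast_ne_zero.mpr (by omega)
  simp [Pc_apply_coord]
  field_simp

lemma Pc_ones (n : ℕ) (hn : 1 ≤ n) : Pc n (onesVec n) = onesVec n := by
  have hn' : (n : ℝ) ≠ 0 := Nat.cast_ne_zero.mpr (by omega)
  ext i
  simp [Pc_apply_coord, onesVec]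
  field_simp

lemma Pc_idem (n : ℕ) (hn : 1 ≤ n) (x : EuclideanSpace ℝ (Fin n)) :
    Pc n (Pc n x) = Pc n x := by
  ext i
  rw [Pc_apply_coord, Pc_apply_coord, sum_Pc n hn]

lemma Pc_selfadj (n : ℕ) (x y : EuclideanSpace ℝ (Fin n)) :
    ⟪Pc n x, y⟫_ℝ = ⟪x, Pc n y⟫_ℝ := by
  simp [PiLp.inner_apply, Pc_apply_coord, ← Finset.sum_mul, ← Finset.mul_sum]
  ring

noncomputable def Qc (n : ℕ) : EuclideanSpace ℝ (Fin n) →L[ℝ] EuclideanSpace ℝ (Fin n) :=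
  ContinuousLinearMap.id ℝ _ - Pc n

lemma Qc_apply (n : ℕ) (x : EuclideanSpace ℝ (Fin n)) : Qc n x = x - Pc n x := rfl

lemma Qc_selfadj (n : ℕ) (x y : EuclideanSpace ℝ (Fin n)) :
    ⟪Qc n x, y⟫_ℝ = ⟪x, Qc n y⟫_ℝ := by
  rw [Qc_apply, Qc_apply, inner_sub_left, inner_sub_right, Pc_selfadj]

lemma Qc_ones (n : ℕ) (hn : 1 ≤ n) : Qc n (onesVec n) = 0 := by
  simp [Qc_apply, Pc_ones n hn]

lemma grad_inner {h : EuclideanSpace ℝ (Fin n) → ℝ} (z w : EuclideanSpace ℝ (Fin n)) :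
    ⟪gradient h z, w⟫_ℝ = fderiv ℝ h z w := by
  rw [gradient, InnerProductSpace.toDual_symm_apply]

lemma grad_hom {n : ℕ} {h : EuclideanSpace ℝ (Fin n) → ℝ}
    (hdiff : Differentiable ℝ h)
    (hhom : ∀ (x : EuclideanSpace ℝ (Fin n)) (a : ℝ), 0 < a → h (a • x) = a ^ 2 * h x)
    (z : EuclideanSpace ℝ (Fin n)) (a : ℝ) (ha : 0 < a) :
    gradient h (a • z) = a • gradient h z := by
  have ha' : a ≠ 0 := ne_of_gt ha
  have H1 : HasFDerivAt (fun y => h (a • y))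
      ((fderiv ℝ h (a • z)).comp (a • ContinuousLinearMap.id ℝ (EuclideanSpace ℝ (Fin n)))) z :=
    (hdiff (a • z)).hasFDerivAt.comp z ((hasFDerivAt_id z).const_smul a)
  have H2 : HasFDerivAt (fun y => a ^ 2 * h y) ((a ^ 2) • fderiv ℝ h z) z :=
    (hdiff z).hasFDerivAt.const_mul (a ^ 2)
  have hfun : (fun y => h (a • y)) = fun y => a ^ 2 * h y := funext fun y => hhom y a ha
  rw [hfun] at H1
  have heq := H1.unique H2
  have key : fderiv ℝ h (a • z) = a • fderiv ℝ h z := by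
    ext v
    have := congrFun (congrArg (fun (L : EuclideanSpace ℝ (Fin n) →L[ℝ] ℝ) => (L : EuclideanSpace ℝ (Fin n) → ℝ)) heq) (a⁻¹ • v)
    simp [smul_smul, ha'] at this
    simp [this]
    field_simp
  rw [gradient, gradient, key]
  simp

lemma grad_htilde {n : ℕ} (hn : 1 ≤ n) {h : EuclideanSpace ℝ (Fin n) → ℝ}
    (hdiff : Differentiable ℝ h)
    {htilde : EuclideanSpace ℝ (Fin n) → ℝ}
    (htilde_def : ∀ x, htilde x = h (x - meanProj n x) + (1 / 2) * ‖meanProj n x‖ ^ 2)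
    (x : EuclideanSpace ℝ (Fin n)) :
    gradient htilde x = Qc n (gradient h (Qc n x)) + Pc n x := by
  have hq : HasFDerivAt (fun y => h (Qc n y)) ((fderiv ℝ h (Qc n x)).comp (Qc n)) x :=
    (hdiff (Qc n x)).hasFDerivAt.comp x (Qc n).hasFDerivAt
  have hp : HasFDerivAt (fun y => ⟪Pc n y, Pc n y⟫_ℝ)
      ((fderivInnerCLM ℝ (Pc n x, Pc n x)).comp ((Pc n).prod (Pc n))) x :=
    ((Pc n).hasFDerivAt).inner ℝ ((Pc n).hasFDerivAt)
  have hp2 : HasFDerivAt (fun y => (1 / 2 : ℝ) * ⟪Pc n y, Pc n y⟫_ℝ)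
      ((1 / 2 : ℝ) • ((fderivInnerCLM ℝ (Pc n x, Pc n x)).comp ((Pc n).prod (Pc n)))) x :=
    hp.const_mul (1 / 2)
  have hfun : htilde = fun y => h (Qc n y) + (1 / 2 : ℝ) * ⟪Pc n y, Pc n y⟫_ℝ := by
    funext y
    rw [htilde_def y, Qc_apply, Pc_apply, real_inner_self_eq_norm_sq]
  have hD : HasFDerivAt htilde
      ((fderiv ℝ h (Qc n x)).comp (Qc n)
        + (1 / 2 : ℝ) • ((fderivInnerCLM ℝ (Pc n x, Pc n x)).comp ((Pc n).prod (Pc n)))) x := by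
    rw [hfun]; exact hq.add hp2
  have hgoal : HasGradientAt htilde (Qc n (gradient h (Qc n x)) + Pc n x) x := by
    rw [hasGradientAt_iff_hasFDerivAt]
    refine hD.congr_fderiv ?_
    symm
    ext v
    rw [InnerProductSpace.toDual_apply_apply]
    rw [inner_add_left, Qc_selfadj, grad_inner]
    have hPP : ⟪Pc n x, v⟫_ℝ = ⟪Pc n x, Pc n v⟫_ℝ := by
      rw [← Pc_selfadj, Pc_idem n hn]
    rw [hPP]
    simp [fderivInnerCLM_apply, real_inner_comm (Pc n v) (Pc n x)]
    ring
  exact hgoal.gradient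

/-- equivariance part of the AE-LPN Lemma: if `h` is differentiable and
positively homogeneous of degree two, then the gradient of
`h̃(x) = h((I−P)x) + (1/2)·‖Px‖²` is scalar-affine equivariant:
`∇h̃(a·x + c·𝟏) = a·∇h̃(x) + c·𝟏`. -/
theorem aelpn_gradient_affine_equivariant
    (n : ℕ) (hn : 1 ≤ n) (h : EuclideanSpace ℝ (Fin n) → ℝ)
    (hdiff : Differentiable ℝ h)
    (hhom : ∀ (x : EuclideanSpace ℝ (Fin n)) (a : ℝ), 0 < a → h (a • x) = a ^ 2 * h x)
    (htilde : EuclideanSpace ℝ (Fin n) → ℝ)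
    (htilde_def : ∀ x, htilde x = h (x - meanProj n x) + (1 / 2) * ‖meanProj n x‖ ^ 2) :
    ∀ (x : EuclideanSpace ℝ (Fin n)) (a : ℝ) (c : ℝ), 0 < a →
      gradient htilde (a • x + c • onesVec n) = a • gradient htilde x + c • onesVec n := by
  intro x a c ha
  rw [grad_htilde hn hdiff htilde_def, grad_htilde hn hdiff htilde_def]
  have hQ : Qc n (a • x + c • onesVec n) = a • Qc n x := by
    rw [map_add, map_smul, map_smul, Qc_ones n hn, smul_zero, add_zero]
  have hP : Pc n (a • x + c • onesVec n) = a • Pc n x + c • onesVec n := by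
    rw [map_add, map_smul, map_smul, Pc_ones n hn]
  rw [hQ, hP, grad_hom hdiff hhom _ a ha, map_smul]
  module
end

section
/- Let μ ∈ ℝ and σ₁, σ₂, λ > 0, and define g : ℝ → ℝ by g(x) = (x − μ)²/(2σ₁²) if x < μ and g(x) = (x − μ)²/(2σ₂²) if x ≥ μ (the negative log-density of the split normal distribution 𝒮𝒩(μ, σ₁, σ₂), up to an additive constant). Then for every y ∈ ℝ, the function F(x) = (1/2)(x − y)² + λ·g(x) has a unique global minimizer, equal to (λμ + σ₁²·y)/(λ + σ₁²) if y < μ and (λμ + σ₂²·y)/(λ + σ₂²) if y ≥ μ. In other words, prox_{λg}(y) is given by this piecewise-linear formula. -/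
private lemma key_quad (L s μ y x : ℝ) (hs : 0 < s) (hL : 0 < L) :
    (1/2) * (x - y)^2 + L * ((x - μ)^2 / (2*s)) =
    (1/2) * ((L*μ + s*y)/(L+s) - y)^2 + L * (((L*μ + s*y)/(L+s) - μ)^2 / (2*s))
      + ((L+s)/(2*s)) * (x - (L*μ + s*y)/(L+s))^2 := by
  have h : L + s ≠ 0 := by positivity
  have h2 : s ≠ 0 := ne_of_gt hs
  field_simp
  ring

/-- the proximal operator of `λ·g`, where `g` is the negative log-density of
the split normal distribution `𝒮𝒩(μ, σ₁, σ₂)`, is the stated piecewise-linear map: for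
every `y`, `F(x) = (1/2)(x−y)² + λ·g(x)` has a unique global minimizer, equal to
`(λμ + σ₁²y)/(λ + σ₁²)` if `y < μ` and `(λμ + σ₂²y)/(λ + σ₂²)` if `y ≥ μ`. -/
theorem split_normal_prox
    (μ σ₁ σ₂ lam : ℝ) (hσ₁ : 0 < σ₁) (hσ₂ : 0 < σ₂) (hlam : 0 < lam)
    (g : ℝ → ℝ)
    (hg : ∀ x, g x = if x < μ then (x - μ) ^ 2 / (2 * σ₁ ^ 2) else (x - μ) ^ 2 / (2 * σ₂ ^ 2)) :
    ∀ y : ℝ,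
      (∀ x : ℝ,
        (1 / 2) * ((if y < μ then (lam * μ + σ₁ ^ 2 * y) / (lam + σ₁ ^ 2)
            else (lam * μ + σ₂ ^ 2 * y) / (lam + σ₂ ^ 2)) - y) ^ 2
          + lam * g (if y < μ then (lam * μ + σ₁ ^ 2 * y) / (lam + σ₁ ^ 2)
            else (lam * μ + σ₂ ^ 2 * y) / (lam + σ₂ ^ 2)) ≤
        (1 / 2) * (x - y) ^ 2 + lam * g x) ∧
      (∀ p : ℝ,
        (∀ x : ℝ, (1 / 2) * (p - y) ^ 2 + lam * g p ≤ (1 / 2) * (x - y) ^ 2 + lam * g x) →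
        p = (if y < μ then (lam * μ + σ₁ ^ 2 * y) / (lam + σ₁ ^ 2)
            else (lam * μ + σ₂ ^ 2 * y) / (lam + σ₂ ^ 2))) := by
  intro y
  set s1 := σ₁ ^ 2 with hs1def
  set s2 := σ₂ ^ 2 with hs2def
  have hs1 : 0 < s1 := by positivity
  have hs2 : 0 < s2 := by positivity
  have hL := hlam
  set q : ℝ := if y < μ then (lam * μ + s1 * y) / (lam + s1)
      else (lam * μ + s2 * y) / (lam + s2) with hq
  have hstrict : ∀ x : ℝ, x ≠ q →
      (1/2) * (q - y)^2 + lam * g q < (1/2) * (x - y)^2 + lam * g x := by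
    intro x hx
    by_cases hy : y < μ
    · -- q = p1 < μ
      have hqe : q = (lam * μ + s1 * y) / (lam + s1) := by rw [hq, if_pos hy]
      have hqlt : q < μ := by
        rw [hqe, div_lt_iff₀ (by positivity)]
        nlinarith
      have hgq : g q = (q - μ)^2 / (2*s1) := by rw [hg, if_pos hqlt]
      have hFμ : (1/2) * (μ - y)^2 =
          (1/2) * (q - y)^2 + lam * ((q - μ)^2 / (2*s1))
            + ((lam+s1)/(2*s1)) * (μ - q)^2 := by
        have := key_quad lam s1 μ y μ hs1 hL
        rw [← hqe] at this
        simpa using this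
      have hqμ : 0 < ((lam+s1)/(2*s1)) * (μ - q)^2 := by
        have : (μ - q)^2 > 0 := by nlinarith
        positivity
      by_cases hxμ : x < μ
      · have hgx : g x = (x - μ)^2 / (2*s1) := by rw [hg, if_pos hxμ]
        have := key_quad lam s1 μ y x hs1 hL
        rw [← hqe] at this
        rw [hgx, hgq, this]
        have h1 : 0 < ((lam+s1)/(2*s1)) * (x - q)^2 := by
          have hne : x - q ≠ 0 := sub_ne_zero.mpr hx
          have : (x - q)^2 > 0 := by positivity
          positivity
        linarith
      · push_neg at hxμ
        have hgx : g x = (x - μ)^2 / (2*s2) := by rw [hg, if_neg (not_lt.mpr hxμ)]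
        have h1 : (1/2) * (μ - y)^2 ≤ (1/2) * (x - y)^2 + lam * ((x - μ)^2 / (2*s2)) := by
          have h2 : (μ - y)^2 ≤ (x - y)^2 := by nlinarith
          have h3 : 0 ≤ lam * ((x - μ)^2 / (2*s2)) := by positivity
          linarith
        rw [hgx, hgq]
        linarith [hFμ, hqμ]
    · -- y ≥ μ, q = p2 ≥ μ
      push_neg at hy
      have hqe : q = (lam * μ + s2 * y) / (lam + s2) := by
        rw [hq, if_neg (not_lt.mpr hy)]
      have hqge : μ ≤ q := by
        rw [hqe, le_div_iff₀ (by positivity)]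
        nlinarith
      have hgq : g q = (q - μ)^2 / (2*s2) := by rw [hg, if_neg (not_lt.mpr hqge)]
      have hFμ : (1/2) * (q - y)^2 + lam * ((q - μ)^2 / (2*s2)) ≤ (1/2) * (μ - y)^2 := by
        have := key_quad lam s2 μ y μ hs2 hL
        rw [← hqe] at this
        have h4 : 0 ≤ ((lam+s2)/(2*s2)) * (μ - q)^2 := by positivity
        simp only [sub_self, ne_eq, OfNat.ofNat_ne_zero, not_false_eq_true, zero_pow,
          zero_div, mul_zero, add_zero] at this
        linarith
      by_cases hxμ : x < μ
      · have hgx : g x = (x - μ)^2 / (2*s1) := by rw [hg, if_pos hxμ]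
        have h2 : (μ - y)^2 < (x - y)^2 := by nlinarith
        have h3 : 0 < lam * ((x - μ)^2 / (2*s1)) := by
          have : (x - μ)^2 > 0 := by nlinarith
          positivity
        rw [hgx, hgq]
        linarith
      · push_neg at hxμ
        have hgx : g x = (x - μ)^2 / (2*s2) := by rw [hg, if_neg (not_lt.mpr hxμ)]
        have := key_quad lam s2 μ y x hs2 hL
        rw [← hqe] at this
        rw [hgx, hgq, this]
        have h1 : 0 < ((lam+s2)/(2*s2)) * (x - q)^2 := by
          have hne : x - q ≠ 0 := sub_ne_zero.mpr hx
          have : (x - q)^2 > 0 := by positivity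
          positivity
        linarith
  constructor
  · intro x
    by_cases hx : x = q
    · subst hx; exact le_rfl
    · exact le_of_lt (hstrict x hx)
  · intro p hp
    by_contra hne
    have h1 := hstrict p hne
    have h2 := hp q
    linarith
end
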